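/- For every positive integer Δ, every ε > 0 and every positive integer k there exists n₀ such that for every n ≥ n₀ and every tree T on n vertices with Δ(T) ≤ Δ rooted at a vertex t₁, there exist pairwise disjoint subsets F₁, …, F_r of V(T) and (not necessarily distinct) vertices v₁, …, v_r of T such that: (1) |F₁ ∪ … ∪ F_r| ≥ (1−ε)n; (2) |F_i| ≤ n^{2/3} for each i; (3) for every i ∈ [r], every x ∈ {t₁} ∪ F₁ ∪ … ∪ F_{i−1} and every y ∈ F_i, the path from x to y in T passes through v_i; (4) for every y ∈ F_i, the distance in T from v_i to y is at least k³. -/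

import Mathlib

/-- `v` lies on the (unique) path from `x` to `y` in `T`. -/
def OnPath {V : Type*} (T : SimpleGraph V) (x y v : V) : Prop :=
  ∀ p : T.Walk x y, p.IsPath → v ∈ p.support

open SimpleGraph Finset

set_option linter.unusedSectionVars false

namespace TreeSplit

variable {V : Type} [Fintype V] [DecidableEq V] {T : SimpleGraph V} [DecidableRel T.Adj]

/-- The chosen path between two vertices of a tree. -/
noncomputable def pth (hT : T.IsTree) (x y : V) : T.Walk x y :=
  (hT.existsUnique_path x y).exists.choose

lemma pth_isPath (hT : T.IsTree) (x y : V) : (pth hT x y).IsPath :=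
  (hT.existsUnique_path x y).exists.choose_spec

lemma eq_pth (hT : T.IsTree) {x y : V} (p : T.Walk x y) (hp : p.IsPath) :
    p = pth hT x y := by
  obtain ⟨q, _, hq⟩ := hT.existsUnique_path x y
  rw [hq p hp, hq _ (pth_isPath hT x y)]

lemma onPath_iff (hT : T.IsTree) {x y v : V} :
    OnPath T x y v ↔ v ∈ (pth hT x y).support := by
  constructor
  · intro h; exact h _ (pth_isPath hT x y)
  · intro h p hp; rwa [eq_pth hT p hp]

lemma length_pth (hT : T.IsTree) (x y : V) : (pth hT x y).length = T.dist x y := by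
  refine le_antisymm ?_ (dist_le _)
  obtain ⟨w, hw⟩ := (hT.isConnected).exists_walk_length_eq_dist x y
  calc (pth hT x y).length = w.bypass.length := by rw [eq_pth hT w.bypass w.bypass_isPath]
    _ ≤ w.length := w.length_bypass_le
    _ = T.dist x y := hw

lemma dist_lt_card (hT : T.IsTree) (x y : V) : T.dist x y < Fintype.card V := by
  rw [← length_pth hT]; exact (pth_isPath hT x y).length_lt

lemma dist_add_of_mem_support (hT : T.IsTree) {x y v : V}
    (hv : v ∈ (pth hT x y).support) : T.dist x v + T.dist v y = T.dist x y := by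
  refine le_antisymm ?_ (hT.isConnected.dist_triangle)
  have h1 : T.dist x v ≤ ((pth hT x y).takeUntil v hv).length := dist_le _
  have h2 : T.dist v y ≤ ((pth hT x y).dropUntil v hv).length := dist_le _
  have h3 : ((pth hT x y).takeUntil v hv).length + ((pth hT x y).dropUntil v hv).length
      = (pth hT x y).length := by
    have := congrArg Walk.length ((pth hT x y).take_spec hv)
    rwa [Walk.length_append] at this
  have h4 : (pth hT x y).length = T.dist x y := length_pth hT x y
  omega

variable (t₁ : V)

/-- The "subtree below `v`" as seen from the root `t₁`. -/
noncomputable def Sset (hT : T.IsTree) (v : V) : Finset V :=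
  Finset.univ.filter (fun y => v ∈ (pth hT t₁ y).support)

lemma mem_Sset (hT : T.IsTree) {v y : V} :
    y ∈ Sset t₁ hT v ↔ v ∈ (pth hT t₁ y).support := by simp [Sset]

lemma mem_Sset_iff_dist (hT : T.IsTree) {v y : V} :
    y ∈ Sset t₁ hT v ↔ T.dist t₁ v + T.dist v y = T.dist t₁ y := by
  rw [mem_Sset]
  constructor
  · exact fun h => dist_add_of_mem_support hT h
  · intro h
    have hw : ((pth hT t₁ v).append (pth hT v y)).length = T.dist t₁ y := by
      rw [Walk.length_append, length_pth hT, length_pth hT, h]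
    have hp : ((pth hT t₁ v).append (pth hT v y)).IsPath :=
      Walk.isPath_of_length_eq_dist _ hw
    have := eq_pth hT _ hp
    rw [← this, Walk.mem_support_append_iff]
    left; exact Walk.end_mem_support _

lemma self_mem_Sset (hT : T.IsTree) (v : V) : v ∈ Sset t₁ hT v := by
  rw [mem_Sset]; exact Walk.end_mem_support _

lemma Sset_root (hT : T.IsTree) : Sset t₁ hT t₁ = Finset.univ := by
  ext y; simp only [Finset.mem_univ, iff_true, mem_Sset]
  exact Walk.start_mem_support _

lemma Sset_trans (hT : T.IsTree) {v c y : V} (hc : c ∈ Sset t₁ hT v)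
    (hy : y ∈ Sset t₁ hT c) : y ∈ Sset t₁ hT v := by
  rw [mem_Sset_iff_dist] at *
  have h1 : T.dist t₁ y ≤ T.dist t₁ v + T.dist v y := hT.isConnected.dist_triangle
  have h2 : T.dist v y ≤ T.dist v c + T.dist c y := hT.isConnected.dist_triangle
  omega

lemma root_mem_Sset (hT : T.IsTree) {v : V} (h : t₁ ∈ Sset t₁ hT v) : v = t₁ := by
  rw [mem_Sset_iff_dist] at h
  rw [SimpleGraph.dist_self] at h
  have : T.dist t₁ v = 0 := by omega
  exact ((hT.isConnected.dist_eq_zero_iff).1 this).symm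

/-- Key separation lemma: if `y` is below `v` but `x` is not, then `v` lies on
the path from `x` to `y`. -/
lemma separation (hT : T.IsTree) {v x y : V} (hy : y ∈ Sset t₁ hT v)
    (hx : x ∉ Sset t₁ hT v) : OnPath T x y v := by
  rw [onPath_iff hT]
  rw [mem_Sset] at hy hx
  set w : T.Walk t₁ y := (pth hT t₁ x).append (pth hT x y) with hw
  have hb : w.bypass = pth hT t₁ y := eq_pth hT _ w.bypass_isPath
  have hv : v ∈ w.support := w.support_bypass_subset (hb ▸ hy)
  rw [hw, Walk.mem_support_append_iff] at hv
  tauto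

end TreeSplit
namespace TreeSplit

variable {V : Type} [Fintype V] [DecidableEq V] {T : SimpleGraph V} [DecidableRel T.Adj] (t₁ : V)

lemma children (hT : T.IsTree) {v y : V} (hy : y ∈ Sset t₁ hT v) (hne : y ≠ v) :
    ∃ c, T.Adj v c ∧ c ∈ Sset t₁ hT v ∧ y ∈ Sset t₁ hT c := by
  obtain ⟨q, hqp, hql⟩ : ∃ q : T.Walk v y, q.IsPath ∧ q.length = T.dist v y :=
    ⟨pth hT v y, pth_isPath hT v y, length_pth hT v y⟩
  cases q with
  | nil => exact absurd rfl hne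
  | @cons _ c _ h q' =>
    refine ⟨c, h, ?_, ?_⟩
    · have hvc : T.dist v c = 1 := (dist_eq_one_iff_adj).2 h
      have h1 : T.dist t₁ c ≤ T.dist t₁ v + T.dist v c := hT.isConnected.dist_triangle
      have h2 : T.dist t₁ y ≤ T.dist t₁ c + T.dist c y := hT.isConnected.dist_triangle
      have hq'l : q'.length = T.dist c y := by
        rw [eq_pth hT q' (hqp.of_cons), length_pth]
      have hyd := (mem_Sset_iff_dist t₁ hT).1 hy
      rw [Walk.length_cons] at hql
      rw [mem_Sset_iff_dist]
      omega
    · have hvc : T.dist v c = 1 := (dist_eq_one_iff_adj).2 h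
      have h1 : T.dist t₁ c ≤ T.dist t₁ v + T.dist v c := hT.isConnected.dist_triangle
      have h2 : T.dist t₁ y ≤ T.dist t₁ c + T.dist c y := hT.isConnected.dist_triangle
      have hq'l : q'.length = T.dist c y := by
        rw [eq_pth hT q' (hqp.of_cons), length_pth]
      have hyd := (mem_Sset_iff_dist t₁ hT).1 hy
      rw [Walk.length_cons] at hql
      rw [mem_Sset_iff_dist]
      omega

end TreeSplit
namespace TreeSplit

variable {V : Type} [Fintype V] [DecidableEq V] {T : SimpleGraph V} [DecidableRel T.Adj]

/-- The ball of radius `d` around `v`. -/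
noncomputable def ball (T : SimpleGraph V) [DecidableRel T.Adj] (v : V) (d : ℕ) : Finset V :=
  Finset.univ.filter (fun y => T.dist v y ≤ d)

lemma card_ball {Δ : ℕ} (hT : T.IsTree) (hdeg : ∀ v : V, (Finset.univ.filter (T.Adj v)).card ≤ Δ)
    (v : V) (d : ℕ) : (ball T v d).card ≤ (Δ + 1) ^ d := by
  induction d with
  | zero =>
    have : ball T v 0 ⊆ {v} := by
      intro y hy
      simp only [ball, Finset.mem_filter, Nat.le_zero] at hy
      simp [(hT.isConnected.dist_eq_zero_iff.1 hy.2).symm]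
    simpa using Finset.card_le_card this
  | succ d ih =>
    have hsub : ball T v (d+1) ⊆ ball T v d ∪ (ball T v d).biUnion
        (fun u => Finset.univ.filter (T.Adj u)) := by
      intro y hy
      simp only [ball, Finset.mem_filter, Finset.mem_univ, true_and] at hy
      rcases Nat.lt_or_ge (T.dist v y) (d+1) with hlt | hge
      · apply Finset.mem_union_left
        simp only [ball, Finset.mem_filter, Finset.mem_univ, true_and]; omega
      · have hd : T.dist v y = d + 1 := by omega
        obtain ⟨p, hp⟩ := hT.isConnected.exists_walk_length_eq_dist v y
        have hrev : p.reverse.length = d + 1 := by rw [Walk.length_reverse, hp, hd]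
        apply Finset.mem_union_right
        cases hr : p.reverse with
        | nil => rw [hr] at hrev; simp at hrev
        | @cons _ u _ h q =>
          rw [hr, Walk.length_cons] at hrev
          have hu : T.dist v u ≤ d := by
            have := dist_le q.reverse
            rw [Walk.length_reverse] at this
            omega
          refine Finset.mem_biUnion.2 ⟨u, ?_, ?_⟩
          · simp only [ball, Finset.mem_filter, Finset.mem_univ, true_and]; exact hu
          · simp [h.symm]
    calc (ball T v (d+1)).card ≤ _ := Finset.card_le_card hsub
      _ ≤ (ball T v d).card + ((ball T v d).biUnion
            (fun u => Finset.univ.filter (T.Adj u))).card := Finset.card_union_le _ _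
      _ ≤ (ball T v d).card + ∑ u ∈ ball T v d, (Finset.univ.filter (T.Adj u)).card := by
            gcongr; exact Finset.card_biUnion_le
      _ ≤ (ball T v d).card + ∑ u ∈ ball T v d, Δ := by gcongr with u hu; exact hdeg u
      _ = (ball T v d).card * (Δ + 1) := by rw [Finset.sum_const, smul_eq_mul]; ring
      _ ≤ (Δ + 1) ^ d * (Δ + 1) := by gcongr
      _ = (Δ + 1) ^ (d + 1) := by ring

end TreeSplit
namespace TreeSplit

variable {V : Type} [Fintype V] [DecidableEq V] {T : SimpleGraph V} [DecidableRel T.Adj] (t₁ : V)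

/-- The record of the greedy decomposition. -/
def Good (hT : T.IsTree) (Δ m : ℕ) : Finset V → List V → Prop
  | R, [] => R.card ≤ m
  | R, v :: l => m < (Sset t₁ hT v ∩ R).card ∧ (Sset t₁ hT v ∩ R).card ≤ 1 + Δ * m ∧
      Good hT Δ m (R \ Sset t₁ hT v) l

lemma exists_good (hT : T.IsTree) (Δ m : ℕ)
    (hdeg : ∀ v : V, (Finset.univ.filter (T.Adj v)).card ≤ Δ) :
    ∀ N (R : Finset V), R.card ≤ N → ∃ l : List V, Good t₁ hT Δ m R l := by
  intro N
  induction N with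
  | zero =>
    intro R hR
    exact ⟨[], by simpa [Good] using hR.trans (Nat.zero_le m)⟩
  | succ N ih =>
    intro R hR
    by_cases hRm : R.card ≤ m
    · exact ⟨[], hRm⟩
    push_neg at hRm
    set n := Fintype.card V with hn
    set A : Finset V := Finset.univ.filter (fun v => m < (Sset t₁ hT v ∩ R).card) with hA
    have ht₁A : t₁ ∈ A := by
      simp only [hA, Finset.mem_filter, Finset.mem_univ, true_and, Sset_root, Finset.univ_inter]
      exact hRm
    set f : V → ℕ := fun v => (Sset t₁ hT v ∩ R).card * (n + 2) + (n + 1 - T.dist t₁ v) with hf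
    obtain ⟨v, hvA, hvmin⟩ := Finset.exists_min_image A f ⟨t₁, ht₁A⟩
    simp only [hA, Finset.mem_filter, Finset.mem_univ, true_and] at hvA
    -- every "child subtree" is small
    have hchild : ∀ c, T.Adj v c → c ∈ Sset t₁ hT v → (Sset t₁ hT c ∩ R).card ≤ m := by
      intro c hadj hcS
      by_contra hbig
      push_neg at hbig
      have hcA : c ∈ A := by simp [hA, hbig]
      have hsub : Sset t₁ hT c ∩ R ⊆ Sset t₁ hT v ∩ R := by
        intro y hy
        simp only [Finset.mem_inter] at hy ⊢
        exact ⟨Sset_trans t₁ hT hcS hy.1, hy.2⟩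
      have hcard : (Sset t₁ hT c ∩ R).card ≤ (Sset t₁ hT v ∩ R).card :=
        Finset.card_le_card hsub
      have hdistc : T.dist t₁ c = T.dist t₁ v + 1 := by
        have h1 := (mem_Sset_iff_dist t₁ hT).1 hcS
        have h2 : T.dist v c = 1 := (dist_eq_one_iff_adj).2 hadj
        omega
      have hdlt : T.dist t₁ c < n := dist_lt_card hT t₁ c
      have : f c < f v := by
        rcases eq_or_lt_of_le hcard with heq | hlt
        · rw [hf]; simp only []
          rw [heq]
          apply Nat.add_lt_add_left
          omega
        · calc f c ≤ (Sset t₁ hT c ∩ R).card * (n + 2) + (n + 1) := by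
                rw [hf]; simp only []; omega
            _ < ((Sset t₁ hT c ∩ R).card + 1) * (n + 2) := by ring_nf; omega
            _ ≤ (Sset t₁ hT v ∩ R).card * (n + 2) := by
                apply Nat.mul_le_mul_right; omega
            _ ≤ f v := Nat.le_add_right _ _
      exact absurd (hvmin c hcA) (by omega)
    -- the subtree at v is not too large
    have hvbig : (Sset t₁ hT v ∩ R).card ≤ 1 + Δ * m := by
      set D : Finset V := Finset.univ.filter (fun c => T.Adj v c ∧ c ∈ Sset t₁ hT v) with hD
      have hsub : Sset t₁ hT v ∩ R ⊆
          insert v (D.biUnion (fun c => Sset t₁ hT c ∩ R)) := by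
        intro y hy
        rcases eq_or_ne y v with rfl | hne
        · exact Finset.mem_insert_self _ _
        · apply Finset.mem_insert_of_mem
          rw [Finset.mem_inter] at hy
          obtain ⟨c, hadj, hcS, hyc⟩ := children t₁ hT hy.1 hne
          exact Finset.mem_biUnion.2 ⟨c, by simp [hD, hadj, hcS],
            Finset.mem_inter.2 ⟨hyc, hy.2⟩⟩
      have hDcard : D.card ≤ Δ := by
        apply le_trans (Finset.card_le_card _) (hdeg v)
        intro c hc
        simp only [hD, Finset.mem_filter] at hc
        simp [hc.2.1]
      calc (Sset t₁ hT v ∩ R).card ≤ _ := Finset.card_le_card hsub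
        _ ≤ 1 + (D.biUnion (fun c => Sset t₁ hT c ∩ R)).card := by
            apply le_trans (Finset.card_insert_le _ _); omega
        _ ≤ 1 + ∑ c ∈ D, (Sset t₁ hT c ∩ R).card := by
            gcongr; exact Finset.card_biUnion_le
        _ ≤ 1 + ∑ c ∈ D, m := by
            gcongr with c hc
            simp only [hD, Finset.mem_filter] at hc
            exact hchild c hc.2.1 hc.2.2
        _ = 1 + D.card * m := by rw [Finset.sum_const, smul_eq_mul]
        _ ≤ 1 + Δ * m := by gcongr
    -- recurse
    have hne : (Sset t₁ hT v ∩ R).Nonempty := Finset.card_pos.1 (by omega)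
    have hcard' : (R \ Sset t₁ hT v).card ≤ N := by
      have h1 : (R ∩ Sset t₁ hT v).card + (R \ Sset t₁ hT v).card = R.card :=
        Finset.card_inter_add_card_sdiff R (Sset t₁ hT v)
      have h2 : (R ∩ Sset t₁ hT v).card = (Sset t₁ hT v ∩ R).card := by
        rw [Finset.inter_comm]
      omega
    obtain ⟨l, hl⟩ := ih (R \ Sset t₁ hT v) hcard'
    exact ⟨v :: l, hvA, hvbig, hl⟩

end TreeSplit
namespace TreeSplit

variable {V : Type} [Fintype V] [DecidableEq V] {T : SimpleGraph V} [DecidableRel T.Adj] (t₁ : V)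

lemma extract (hT : T.IsTree) (Δ m k : ℕ)
    (hdeg : ∀ v : V, (Finset.univ.filter (T.Adj v)).card ≤ Δ) :
    ∀ (l : List V) (R : Finset V), Good t₁ hT Δ m R l →
    ∃ F : Fin l.length → Finset V,
      (∀ i, F i ⊆ R) ∧
      (∀ i, F i ⊆ Sset t₁ hT (l.get i)) ∧
      (∀ i, ∀ y ∈ F i, k ^ 3 ≤ T.dist (l.get i) y) ∧
      (∀ i j, i < j → ∀ x ∈ F j, x ∉ Sset t₁ hT (l.get i)) ∧
      (∀ i, (F i).card ≤ 1 + Δ * m) ∧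
      (R.card ≤ (∑ i, (F i).card) + m + l.length * (Δ + 1) ^ (k ^ 3)) ∧
      ((m + 1) * l.length ≤ R.card) := by
  intro l
  induction l with
  | nil =>
    intro R hR
    refine ⟨Fin.elim0, ?_, ?_, ?_, ?_, ?_, ?_, ?_⟩ <;>
      first
        | exact fun i => i.elim0
        | simp_all [Good]
  | cons v l ih =>
    intro R hR
    obtain ⟨h1, h2, h3⟩ := hR
    obtain ⟨F', hF1, hF2, hF3, hF4, hF5, hF6, hF7⟩ := ih (R \ Sset t₁ hT v) h3
    set F0 : Finset V := (Sset t₁ hT v ∩ R).filter (fun y => k ^ 3 ≤ T.dist v y) with hF0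
    set F : Fin (v :: l).length → Finset V := Fin.cases F0 F' with hF
    have hget0 : (v :: l).get (0 : Fin (l.length + 1)) = v := rfl
    have hgets : ∀ i : Fin l.length, (v :: l).get i.succ = l.get i := fun i => rfl
    have hcount : (Sset t₁ hT v ∩ R).card ≤ F0.card + (Δ + 1) ^ (k ^ 3) := by
      have heq := Finset.card_filter_add_card_filter_not
        (s := Sset t₁ hT v ∩ R) (p := fun y => k ^ 3 ≤ T.dist v y)
      have hnear : ((Sset t₁ hT v ∩ R).filter (fun y => ¬ k ^ 3 ≤ T.dist v y)).card
          ≤ (Δ + 1) ^ (k ^ 3) := by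
        refine le_trans (Finset.card_le_card ?_)
          (card_ball hT hdeg v (k ^ 3))
        intro y hy
        simp only [Finset.mem_filter, not_le] at hy
        simp only [ball, Finset.mem_filter, Finset.mem_univ, true_and]
        omega
      rw [← hF0] at heq
      omega
    have hRsplit : (R ∩ Sset t₁ hT v).card + (R \ Sset t₁ hT v).card = R.card :=
      Finset.card_inter_add_card_sdiff R (Sset t₁ hT v)
    have hRS : (R ∩ Sset t₁ hT v).card = (Sset t₁ hT v ∩ R).card := by
      rw [Finset.inter_comm]
    refine ⟨F, ?_, ?_, ?_, ?_, ?_, ?_, ?_⟩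
    · intro i
      refine Fin.cases ?_ ?_ i
      · intro y hy
        simp only [hF, Fin.cases_zero, hF0, Finset.mem_filter, Finset.mem_inter] at hy
        exact hy.1.2
      · intro i y hy
        simp only [hF, Fin.cases_succ] at hy
        exact (Finset.sdiff_subset) (hF1 i hy)
    · intro i
      refine Fin.cases ?_ ?_ i
      · intro y hy
        simp only [hF, Fin.cases_zero, hF0, Finset.mem_filter, Finset.mem_inter] at hy
        exact hy.1.1
      · intro i y hy
        simp only [hF, Fin.cases_succ] at hy
        exact hF2 i hy
    · intro i
      refine Fin.cases ?_ ?_ i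
      · intro y hy
        simp only [hF, Fin.cases_zero, hF0, Finset.mem_filter] at hy
        exact hy.2
      · intro i y hy
        simp only [hF, Fin.cases_succ] at hy
        exact hF3 i y hy
    · intro i j hij x hx
      refine Fin.cases (motive := fun i => i < j → x ∈ F j →
          x ∉ Sset t₁ hT ((v :: l).get i)) ?_ ?_ i hij hx
      · -- i = 0
        intro hj hxj
        refine Fin.cases (motive := fun j => (0 : Fin (l.length + 1)) < j → x ∈ F j →
            x ∉ Sset t₁ hT v) ?_ ?_ j hj hxj
        · intro h0; exact absurd h0 (lt_irrefl _)
        · intro j _ hxj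
          simp only [hF, Fin.cases_succ] at hxj
          have := hF1 j hxj
          intro hxS
          exact (Finset.mem_sdiff.1 this).2 hxS
      · -- i = succ
        intro i hij' hxj
        refine Fin.cases (motive := fun j => i.succ < j → x ∈ F j →
            x ∉ Sset t₁ hT ((v :: l).get i.succ)) ?_ ?_ j hij' hxj
        · intro h0; exact absurd h0 (Fin.not_lt_zero _)
        · intro j hij'' hxj'
          simp only [hF, Fin.cases_succ] at hxj'
          exact hF4 i j (Fin.succ_lt_succ_iff.1 hij'') x hxj'
    · intro i
      refine Fin.cases ?_ ?_ i
      · simp only [hF, Fin.cases_zero]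
        exact le_trans (Finset.card_le_card (Finset.filter_subset _ _)) h2
      · intro i
        simp only [hF, Fin.cases_succ]
        exact hF5 i
    · have hsum : ∑ i : Fin (l.length + 1), (F i).card
          = F0.card + ∑ i, (F' i).card := by
        rw [Fin.sum_univ_succ]
        simp [hF]
      simp only [List.length_cons]
      rw [hsum]
      have e1 : R.card = (Sset t₁ hT v ∩ R).card + (R \ Sset t₁ hT v).card := by omega
      have e2 : R.card ≤ (F0.card + (Δ + 1) ^ (k ^ 3))
          + ((∑ i, (F' i).card) + m + l.length * (Δ + 1) ^ (k ^ 3)) := by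
        rw [e1]; exact Nat.add_le_add hcount hF6
      have e3 : (l.length + 1) * (Δ + 1) ^ (k ^ 3)
          = l.length * (Δ + 1) ^ (k ^ 3) + (Δ + 1) ^ (k ^ 3) := by ring
      omega
    · simp only [List.length_cons]
      have : (m + 1) * l.length ≤ (R \ Sset t₁ hT v).card := hF7
      have hmul : (m + 1) * (l.length + 1) = (m + 1) * l.length + (m + 1) := by ring
      omega

end TreeSplit
set_option maxHeartbeats 1000000 in
open TreeSplit in
/-- Splitting a bounded-degree tree into pieces `F₁, …, F_r` which are
almost spanning, small, separated from everything earlier by a vertex `v i`, and far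
from that vertex. -/
theorem tree_splitting_pieces :
    ∀ (Δ k : ℕ), 0 < Δ → 0 < k → ∀ ε : ℝ, 0 < ε →
      ∃ n₀ : ℕ, ∀ n : ℕ, n₀ ≤ n →
        ∀ (V : Type) [Fintype V], ∀ (T : SimpleGraph V) (t₁ : V),
          T.IsTree → Fintype.card V = n →
          (∀ v : V, ({w : V | T.Adj v w} : Set V).ncard ≤ Δ) →
          ∃ (r : ℕ) (F : Fin r → Set V) (vtx : Fin r → V),
            ((Set.univ : Set (Fin r)).Pairwise fun i j => Disjoint (F i) (F j)) ∧
            (1 - ε) * (n : ℝ) ≤ (((⋃ i, F i) : Set V).ncard : ℝ) ∧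
            (∀ i, ((F i).ncard : ℝ) ≤ (n : ℝ) ^ ((2 : ℝ) / 3)) ∧
            (∀ i : Fin r, ∀ x : V, (x = t₁ ∨ ∃ j, j < i ∧ x ∈ F j) →
              ∀ y ∈ F i, OnPath T x y (vtx i)) ∧
            (∀ i : Fin r, ∀ y ∈ F i, k ^ 3 ≤ T.dist (vtx i) y) := by
  intro Δ k hΔ hk ε hε
  set C : ℕ := (Δ + 1) ^ (k ^ 3) with hC
  set B : ℝ := 2 / ε + 4 * Δ * C / ε + 2 with hB
  have hC1 : (1 : ℕ) ≤ C := Nat.one_le_pow _ _ (by omega)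
  have hB2 : (2 : ℝ) ≤ B := by
    rw [hB]
    have h1 : (0:ℝ) ≤ 2 / ε := by positivity
    have h2 : (0:ℝ) ≤ 4 * Δ * C / ε := by positivity
    linarith
  refine ⟨⌈B ^ 3⌉₊ + 1, ?_⟩
  intro n hn V _ T t₁ hT hcard hdeg
  haveI : DecidableEq V := Classical.decEq V
  haveI : DecidableRel T.Adj := Classical.decRel _
  -- degree hypothesis in `Finset` form
  have hdeg' : ∀ v : V, (Finset.univ.filter (T.Adj v)).card ≤ Δ := by
    intro v
    have hset : {w : V | T.Adj v w} = ↑(Finset.univ.filter (T.Adj v)) := by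
      ext w; simp
    have := hdeg v
    rwa [hset, Set.ncard_coe_finset] at this
  -- the real number `a = n^(1/3)`
  set a : ℝ := (n : ℝ) ^ ((1 : ℝ) / 3) with haDef
  have hn0 : (0:ℝ) ≤ (n:ℝ) := Nat.cast_nonneg n
  have ha0 : 0 ≤ a := Real.rpow_nonneg hn0 _
  have ha3 : a ^ (3:ℕ) = (n : ℝ) := by
    rw [haDef, ← Real.rpow_natCast ((n:ℝ) ^ ((1:ℝ)/3)) 3, ← Real.rpow_mul hn0]
    norm_num
  have ha2 : (n : ℝ) ^ ((2 : ℝ) / 3) = a ^ (2:ℕ) := by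
    rw [haDef, ← Real.rpow_natCast ((n:ℝ) ^ ((1:ℝ)/3)) 2, ← Real.rpow_mul hn0]
    norm_num
  have hna : B ^ 3 < (n : ℝ) := by
    have h1 : B ^ 3 ≤ (⌈B ^ 3⌉₊ : ℝ) := Nat.le_ceil _
    have h2 : ((⌈B ^ 3⌉₊ : ℕ) : ℝ) + 1 ≤ (n : ℝ) := by
      have : (⌈B ^ 3⌉₊ + 1 : ℕ) ≤ n := hn
      exact_mod_cast this
    linarith
  have hBa : B ≤ a := by
    by_contra hlt
    push_neg at hlt
    have : a ^ 3 < B ^ 3 := by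
      apply pow_lt_pow_left₀ hlt ha0
      omega
    rw [ha3] at this
    linarith
  have ha2' : (2:ℝ) ≤ a := le_trans hB2 hBa
  have hεa : 2 ≤ ε * a := by
    have h1 : 2 / ε ≤ a := by
      rw [hB] at hBa
      have h2 : (0:ℝ) ≤ 4 * Δ * C / ε := by positivity
      linarith
    rw [div_le_iff₀ hε] at h1
    linarith [mul_comm ε a]
  have hεc : 4 * (Δ:ℝ) * C ≤ ε * a ^ 2 := by
    have h1 : 4 * (Δ:ℝ) * C / ε ≤ a := by
      rw [hB] at hBa
      have h2 : (0:ℝ) ≤ 2 / ε := by positivity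
      linarith
    rw [div_le_iff₀ hε] at h1
    have h2 : a ≤ a ^ 2 := by nlinarith
    nlinarith
  -- natural number parameters
  set t : ℕ := ⌊(n : ℝ) ^ ((2 : ℝ) / 3)⌋₊ with ht
  set m : ℕ := (t - 1) / Δ with hm
  have ht1 : 1 ≤ t := by
    rw [ht]
    have : (1:ℝ) ≤ (n : ℝ) ^ ((2 : ℝ) / 3) := by rw [ha2]; nlinarith
    exact Nat.le_floor (by exact_mod_cast this)
  have htop : 1 + Δ * m ≤ t := by
    have h1 : m * Δ ≤ t - 1 := Nat.div_mul_le_self _ _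
    have h2 : Δ * m = m * Δ := Nat.mul_comm _ _
    omega
  have htm : t ≤ Δ * m + Δ := by
    have h1 := Nat.div_add_mod (t - 1) Δ
    rw [← hm] at h1
    have h2 : (t-1) % Δ < Δ := Nat.mod_lt _ hΔ
    omega
  have htr : (t : ℝ) ≤ a ^ 2 := by
    rw [ht, ← ha2]
    exact Nat.floor_le (by positivity)
  have hta : a ^ 2 - 1 ≤ (t : ℝ) := by
    have h := Nat.lt_floor_add_one ((n : ℝ) ^ ((2 : ℝ) / 3))
    rw [ht]
    linarith [h, ha2.le, ha2.ge]
  have hmt : m ≤ t := le_trans (Nat.div_le_self _ _) (Nat.sub_le _ _)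
  -- run the decomposition
  obtain ⟨l, hl⟩ := exists_good t₁ hT Δ m hdeg' (Fintype.card V) Finset.univ
    (by rw [Finset.card_univ])
  obtain ⟨F, hF1, hF2, hF3, hF4, hF5, hF6, hF7⟩ := extract t₁ hT Δ m k hdeg' l
    Finset.univ hl
  rw [← hC] at hF6
  clear_value B C a t m
  -- disjointness of the pieces
  have hdisj : ∀ i j : Fin l.length, i ≠ j → Disjoint (F i) (F j) := by
    have key : ∀ i j : Fin l.length, i < j → Disjoint (F i) (F j) := by
      intro i j hij
      rw [Finset.disjoint_left]
      intro x hxi hxj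
      exact hF4 i j hij x hxj (hF2 i hxi)
    intro i j hne
    rcases lt_or_gt_of_ne hne with h | h
    · exact key i j h
    · exact (key j i h).symm
  refine ⟨l.length, fun i => ↑(F i.rev), fun i => l.get i.rev, ?_, ?_, ?_, ?_, ?_⟩
  · -- pairwise disjoint
    rw [Set.pairwise_univ]
    intro i j hne
    show Disjoint (↑(F i.rev) : Set V) ↑(F j.rev)
    rw [Finset.disjoint_coe]
    exact hdisj i.rev j.rev (fun h => hne (Fin.rev_injective h))
  · -- coverage
    have hU : (⋃ i : Fin l.length, (↑(F i.rev) : Set V))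
        = ↑(Finset.univ.biUnion fun i : Fin l.length => F i.rev) := by
      ext y
      simp
    rw [hU, Set.ncard_coe_finset]
    have hbi : (Finset.univ.biUnion fun i : Fin l.length => F i.rev).card
        = ∑ i : Fin l.length, (F i.rev).card :=
      Finset.card_biUnion (fun i _ j _ hne => hdisj i.rev j.rev
        (fun h => hne (Fin.rev_injective h)))
    have hsum : ∑ i : Fin l.length, (F i.rev).card = ∑ i : Fin l.length, (F i).card :=
      Fintype.sum_bijective Fin.rev (Fin.rev_involutive.bijective)
        _ _ (fun i => rfl)
    rw [hbi, hsum]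
    -- numeric part
    have hn6 : n ≤ (∑ i : Fin l.length, (F i).card) + m + l.length * C := by
      rwa [Finset.card_univ, hcard] at hF6
    have hn7 : (m + 1) * l.length ≤ n := by
      have := hF7
      rwa [Finset.card_univ, hcard] at this
    have hmr : (m:ℝ) ≤ a ^ 2 := by
      have : (m:ℝ) ≤ (t:ℝ) := by exact_mod_cast hmt
      linarith
    have hrr : ((m:ℝ) + 1) * (l.length:ℝ) ≤ a ^ 3 := by
      rw [ha3]
      exact_mod_cast hn7
    have htmr : (t:ℝ) ≤ Δ * (m:ℝ) + Δ := by exact_mod_cast htm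
    have hr0 : (0:ℝ) ≤ (l.length:ℝ) := Nat.cast_nonneg _
    have hC0 : (0:ℝ) ≤ (C:ℝ) := Nat.cast_nonneg C
    have hΔ0 : (0:ℝ) ≤ (Δ:ℝ) := Nat.cast_nonneg Δ
    -- r ≤ 2Δa
    have hΔ1 : (1:ℝ) ≤ (Δ:ℝ) := by exact_mod_cast hΔ
    have hm0 : (0:ℝ) ≤ (m:ℝ) := Nat.cast_nonneg m
    have hX0 : (0:ℝ) ≤ (Δ:ℝ) * m := by positivity
    have h1 : a ^ 2 ≤ 2 * (Δ:ℝ) * ((m:ℝ) + 1) := by nlinarith [hta, htmr, hΔ1, hX0]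
    have h2 : (l.length:ℝ) * a ^ 2 ≤ 2 * (Δ:ℝ) * a ^ 3 :=
      calc (l.length:ℝ) * a ^ 2 ≤ (l.length:ℝ) * (2 * (Δ:ℝ) * ((m:ℝ) + 1)) :=
            mul_le_mul_of_nonneg_left h1 hr0
        _ = 2 * (Δ:ℝ) * (((m:ℝ) + 1) * (l.length:ℝ)) := by ring
        _ ≤ 2 * (Δ:ℝ) * a ^ 3 := mul_le_mul_of_nonneg_left hrr (by positivity)
    have h3 : (l.length:ℝ) ≤ 2 * Δ * a := by
      have ha2pos : (0:ℝ) < a ^ 2 := by nlinarith [ha2']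
      rw [← mul_le_mul_iff_of_pos_right ha2pos]
      calc (l.length:ℝ) * a ^ 2 ≤ 2 * Δ * a ^ 3 := h2
        _ = 2 * Δ * a * a ^ 2 := by ring
    have p1 : 2 * a ^ 2 ≤ ε * a ^ 3 :=
      calc 2 * a ^ 2 ≤ (ε * a) * a ^ 2 := mul_le_mul_of_nonneg_right hεa (by positivity)
        _ = ε * a ^ 3 := by ring
    have p2 : 4 * (Δ:ℝ) * C * a ≤ ε * a ^ 3 :=
      calc 4 * (Δ:ℝ) * C * a ≤ (ε * a ^ 2) * a := mul_le_mul_of_nonneg_right hεc ha0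
        _ = ε * a ^ 3 := by ring
    have p3 : (l.length:ℝ) * C ≤ 2 * Δ * a * C := mul_le_mul_of_nonneg_right h3 hC0
    have hfinal : (m:ℝ) + (l.length:ℝ) * C ≤ ε * (n:ℝ) := by
      rw [← ha3]; linarith [hmr, p1, p2, p3]
    have hcast : ((n:ℝ)) ≤ ((∑ i : Fin l.length, (F i).card : ℕ) : ℝ) + (m:ℝ) + (l.length:ℝ) * (C:ℝ) := by
      exact_mod_cast hn6
    linarith
  · -- size of the pieces
    intro i
    rw [Set.ncard_coe_finset]
    have h1 : (F i.rev).card ≤ 1 + Δ * m := hF5 i.rev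
    have h2 : (F i.rev).card ≤ t := le_trans h1 htop
    have : ((F i.rev).card : ℝ) ≤ (t:ℝ) := by exact_mod_cast h2
    rw [ha2]
    linarith
  · -- separation
    intro i x hx y hy
    rw [Finset.mem_coe] at hy
    have hyS : y ∈ Sset t₁ hT (l.get i.rev) := hF2 i.rev hy
    rcases hx with rfl | ⟨j, hji, hxj⟩
    · by_cases hvt : l.get i.rev = x
      · intro p _
        show l.get i.rev ∈ p.support
        rw [hvt]
        exact p.start_mem_support
      · apply separation _ hT hyS
        intro hmem
        exact hvt (root_mem_Sset _ hT hmem)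
    · rw [Finset.mem_coe] at hxj
      have hlt : i.rev < j.rev := (Fin.rev_lt_rev).2 hji
      exact separation _ hT hyS (hF4 i.rev j.rev hlt x hxj)
  · -- distance
    intro i y hy
    rw [Finset.mem_coe] at hy
    exact hF3 i.rev y hy
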